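/- For all integers m ≥ 0 and 0 ≤ i ≤ m, the Boros-Moll coefficients satisfy d_i(m+1) = ((4m-2i+3)(m+i+1))/(2(m+1)(m+1-i)) · d_i(m) − (i(i+1))/((m+1)(m+1-i)) · d_{i+1}(m). -/

import Mathlib

open Finset

noncomputable def d (m : ℕ) (i : ℤ) : ℝ :=
  if 0 ≤ i ∧ i ≤ (m : ℤ) then
    ((2 : ℝ) ^ (2 * m))⁻¹ *
      ∑ k ∈ Finset.Icc i.toNat m,
        2 ^ k * (Nat.choose (2 * m - 2 * k) (m - k) : ℝ) *
          (Nat.choose (m + k) k : ℝ) * (Nat.choose k i.toNat : ℝ)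
  else 0

/-- Summand of the Boros–Moll sum. -/
noncomputable def bmT (M N k : ℕ) : ℝ :=
  2 ^ k * (Nat.choose (2 * M - 2 * k) (M - k) : ℝ) *
    (Nat.choose (M + k) k : ℝ) * (Nat.choose k N : ℝ)

/-- Telescoping certificate. -/
noncomputable def bmG (m n k : ℕ) : ℝ :=
  2 * ((m : ℝ) + 1) * ((n : ℝ) - (k : ℝ)) * 2 ^ k *
    (Nat.choose (2 * (m + 1) - 2 * k) (m + 1 - k) : ℝ) *
    (Nat.choose (m + k) k : ℝ) * (Nat.choose k n : ℝ)

private lemma bm_r1 (j : ℕ) :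
    ((j : ℝ) + 1) * (Nat.choose (2 * j + 2) (j + 1) : ℝ)
      = (4 * (j : ℝ) + 2) * (Nat.choose (2 * j) j : ℝ) := by
  have h := Nat.succ_mul_centralBinom_succ j
  rw [Nat.centralBinom, Nat.centralBinom, show 2 * (j + 1) = 2 * j + 2 by ring] at h
  exact_mod_cast congrArg (Nat.cast : ℕ → ℝ)
    (by rw [h]; ring : (j + 1) * Nat.choose (2 * j + 2) (j + 1)
      = (4 * j + 2) * Nat.choose (2 * j) j)

private lemma bm_r2 (M K : ℕ) :
    ((K : ℝ) + 1) * (Nat.choose (M + K + 1) (K + 1) : ℝ)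
      = ((M : ℝ) + (K : ℝ) + 1) * (Nat.choose (M + K) K : ℝ) := by
  have h := Nat.add_one_mul_choose_eq (M + K) K
  have hc := congrArg (Nat.cast : ℕ → ℝ) h
  push_cast at hc
  linear_combination -hc

private lemma bm_r3 (M K : ℕ) :
    ((M : ℝ) + 1) * (Nat.choose (M + 1 + K) K : ℝ)
      = ((M : ℝ) + 1 + (K : ℝ)) * (Nat.choose (M + K) K : ℝ) := by
  have h := Nat.add_one_mul_choose_eq (M + K) M
  have hs1 : Nat.choose (M + K) M = Nat.choose (M + K) K := by
    have := Nat.choose_symm (Nat.le_add_left K M)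
    rwa [show M + K - K = M by omega] at this
  have hs2 : Nat.choose (M + K + 1) (M + 1) = Nat.choose (M + 1 + K) K := by
    have := Nat.choose_symm (show K ≤ M + 1 + K by omega)
    rw [show M + 1 + K - K = M + 1 by omega] at this
    rw [show M + K + 1 = M + 1 + K by omega, this]
  rw [hs1, hs2] at h
  have hc := congrArg (Nat.cast : ℕ → ℝ) h
  push_cast at hc
  linear_combination -hc

private lemma bm_r4 (k n : ℕ) (hn : n ≤ k) :
    (Nat.choose (k + 1) n : ℝ) * ((k : ℝ) + 1 - (n : ℝ))
      = ((k : ℝ) + 1) * (Nat.choose k n : ℝ) := by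
  have h := Nat.choose_mul_succ_eq k n
  have h' : (Nat.choose k n * (k + 1) : ℕ) = Nat.choose (k + 1) n * (k + 1 - n) := h
  have hc : ((k + 1 - n : ℕ) : ℝ) = (k : ℝ) + 1 - n := by
    push_cast [Nat.cast_sub (show n ≤ k + 1 by omega)]; ring
  calc (Nat.choose (k + 1) n : ℝ) * ((k : ℝ) + 1 - (n : ℝ))
      = ((Nat.choose (k + 1) n * (k + 1 - n) : ℕ) : ℝ) := by push_cast [hc]; ring
    _ = ((Nat.choose k n * (k + 1) : ℕ) : ℝ) := by rw [← h']
    _ = ((k : ℝ) + 1) * (Nat.choose k n : ℝ) := by push_cast; ring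

private lemma bm_r5 (k n : ℕ) (hn : n ≤ k) :
    (Nat.choose k (n + 1) : ℝ) * ((n : ℝ) + 1)
      = (Nat.choose k n : ℝ) * ((k : ℝ) - (n : ℝ)) := by
  have h := Nat.choose_succ_right_eq k n
  have hc : ((k - n : ℕ) : ℝ) = (k : ℝ) - n := by
    push_cast [Nat.cast_sub hn]; ring
  calc (Nat.choose k (n + 1) : ℝ) * ((n : ℝ) + 1)
      = ((Nat.choose k (n + 1) * (n + 1) : ℕ) : ℝ) := by push_cast; ring
    _ = ((Nat.choose k n * (k - n) : ℕ) : ℝ) := by rw [h]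
    _ = (Nat.choose k n : ℝ) * ((k : ℝ) - n) := by push_cast [hc]; ring

private lemma bm_pointwise (m n k : ℕ) (hn : n ≤ k) (hk : k ≤ m) :
    ((m : ℝ) + 1) * ((m : ℝ) + 1 - (n : ℝ)) * bmT (m + 1) n k
      = 2 * (4 * (m : ℝ) - 2 * (n : ℝ) + 3) * ((m : ℝ) + (n : ℝ) + 1) * bmT m n k
        - 4 * (n : ℝ) * ((n : ℝ) + 1) * bmT m (n + 1) k
        + (bmG m n (k + 1) - bmG m n k) := by
  obtain ⟨j, rfl⟩ : ∃ j, m = k + j := ⟨m - k, by omega⟩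
  unfold bmT bmG
  rw [show 2 * (k + j + 1) - 2 * k = 2 * j + 2 by omega,
    show k + j + 1 - k = j + 1 by omega,
    show 2 * (k + j) - 2 * k = 2 * j by omega,
    show k + j - k = j by omega,
    show 2 * (k + j + 1) - 2 * (k + 1) = 2 * j by omega,
    show k + j + 1 - (k + 1) = j by omega,
    show k + j + (k + 1) = k + j + k + 1 by omega]
  have h1 := bm_r1 j
  have h2 := bm_r2 (k + j) k
  have h3 := bm_r3 (k + j) k
  have h4 := bm_r4 k n hn
  have h5 := bm_r5 k n hn
  have hj : ((j : ℝ) + 1) ≠ 0 := by positivity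
  have hk1 : ((k : ℝ) + 1) ≠ 0 := by positivity
  have hm1 : ((k : ℝ) + (j : ℝ) + 1) ≠ 0 := by positivity
  have hn1 : ((n : ℝ) + 1) ≠ 0 := by positivity
  have hkn : ((k : ℝ) + 1 - (n : ℝ)) ≠ 0 := by
    have : (n : ℝ) ≤ k := by exact_mod_cast hn
    nlinarith
  have hA : (Nat.choose (2 * j + 2) (j + 1) : ℝ)
      = (4 * (j : ℝ) + 2) * (Nat.choose (2 * j) j : ℝ) / ((j : ℝ) + 1) := by
    field_simp; linarith [h1]
  have hB : (Nat.choose (k + j + k + 1) (k + 1) : ℝ)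
      = ((k : ℝ) + (j : ℝ) + (k : ℝ) + 1) * (Nat.choose (k + j + k) k : ℝ) / ((k : ℝ) + 1) := by
    rw [show k + j + k + 1 = (k + j) + k + 1 by omega] at *
    field_simp
    push_cast at h2
    linarith [h2]
  have hB' : (Nat.choose (k + j + 1 + k) k : ℝ)
      = ((k : ℝ) + (j : ℝ) + 1 + (k : ℝ)) * (Nat.choose (k + j + k) k : ℝ)
          / ((k : ℝ) + (j : ℝ) + 1) := by
    field_simp
    push_cast at h3
    linarith [h3]
  have hC' : (Nat.choose (k + 1) n : ℝ)
      = ((k : ℝ) + 1) * (Nat.choose k n : ℝ) / ((k : ℝ) + 1 - (n : ℝ)) := by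
    field_simp; linarith [h4]
  have hc2 : (Nat.choose k (n + 1) : ℝ)
      = (Nat.choose k n : ℝ) * ((k : ℝ) - (n : ℝ)) / ((n : ℝ) + 1) := by
    field_simp; linarith [h5]
  rw [hA, hB, hB', hC', hc2]
  push_cast
  field_simp
  ring

private lemma bm_tel (f : ℕ → ℝ) :
    ∀ m n : ℕ, n ≤ m → ∑ k ∈ Icc n m, (f (k + 1) - f k) = f (m + 1) - f n := by
  intro m
  induction m with
  | zero =>
    intro n hn
    interval_cases n
    simp
  | succ m ih =>
    intro n hn
    rcases Nat.lt_or_ge n (m + 1) with h | h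
    · rw [Finset.sum_Icc_succ_top (by omega), ih n (by omega)]
      ring
    · have : n = m + 1 := by omega
      subst this
      simp

private lemma bm_boundary (m n : ℕ) (hn : n ≤ m) :
    ((m : ℝ) + 1) * ((m : ℝ) + 1 - (n : ℝ)) * bmT (m + 1) n (m + 1)
      + bmG m n (m + 1) = 0 := by
  unfold bmT bmG
  rw [show 2 * (m + 1) - 2 * (m + 1) = 0 by omega,
    show m + 1 - (m + 1) = 0 by omega,
    show m + 1 + (m + 1) = 2 * m + 2 by omega,
    show m + (m + 1) = 2 * m + 1 by omega]
  have hch : Nat.choose (2 * m + 2) (m + 1) = 2 * Nat.choose (2 * m + 1) (m + 1) := by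
    have h1 : Nat.choose (2 * m + 2) (m + 1) =
        Nat.choose (2 * m + 1) m + Nat.choose (2 * m + 1) (m + 1) :=
      Nat.choose_succ_succ' (2 * m + 1) m
    have h2 : Nat.choose (2 * m + 1) m = Nat.choose (2 * m + 1) (m + 1) := by
      have := Nat.choose_symm (show m + 1 ≤ 2 * m + 1 by omega)
      rwa [show 2 * m + 1 - (m + 1) = m by omega] at this
    rw [h1, h2]; ring
  rw [hch]
  push_cast
  ring

private lemma bm_master (m n : ℕ) (hn : n ≤ m) :
    ((m : ℝ) + 1) * ((m : ℝ) + 1 - (n : ℝ)) * ∑ k ∈ Icc n (m + 1), bmT (m + 1) n k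
      = 2 * (4 * (m : ℝ) - 2 * (n : ℝ) + 3) * ((m : ℝ) + (n : ℝ) + 1) *
          ∑ k ∈ Icc n m, bmT m n k
        - 4 * (n : ℝ) * ((n : ℝ) + 1) * ∑ k ∈ Icc n m, bmT m (n + 1) k := by
  rw [Finset.sum_Icc_succ_top (by omega : n ≤ m + 1)]
  have hpt : ∑ k ∈ Icc n m, (((m : ℝ) + 1) * ((m : ℝ) + 1 - (n : ℝ)) * bmT (m + 1) n k)
      = ∑ k ∈ Icc n m,
          (2 * (4 * (m : ℝ) - 2 * (n : ℝ) + 3) * ((m : ℝ) + (n : ℝ) + 1) * bmT m n k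
            - 4 * (n : ℝ) * ((n : ℝ) + 1) * bmT m (n + 1) k
            + (bmG m n (k + 1) - bmG m n k)) := by
    refine Finset.sum_congr rfl fun k hk => ?_
    rw [Finset.mem_Icc] at hk
    exact bm_pointwise m n k hk.1 hk.2
  have htel := bm_tel (bmG m n) m n hn
  have hbd := bm_boundary m n hn
  have hGn : bmG m n n = 0 := by unfold bmG; rw [sub_self]; ring
  rw [mul_add, Finset.mul_sum, hpt, Finset.sum_add_distrib, Finset.sum_sub_distrib,
    htel, ← Finset.mul_sum, ← Finset.mul_sum]
  rw [hGn] at *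
  linarith [hbd]

theorem boros_moll_recu2 (m : ℕ) (i : ℤ) (h0 : 0 ≤ i) (h1 : i ≤ (m : ℤ)) :
    d (m + 1) i = ((4 * m - 2 * i + 3) * (m + i + 1) : ℝ) / (2 * (m + 1) * (m + 1 - i)) * d m i
      - ((i * (i + 1) : ℝ) / ((m + 1) * (m + 1 - i))) * d m (i + 1) := by
  set n := i.toNat with hn
  have hin : i = (n : ℤ) := (Int.toNat_of_nonneg h0).symm
  have hnm : n ≤ m := by omega
  have hir : (i : ℝ) = (n : ℝ) := by exact_mod_cast congrArg (Int.cast : ℤ → ℝ) hin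
  have hd1 : d (m + 1) i = ((2 : ℝ) ^ (2 * (m + 1)))⁻¹ * ∑ k ∈ Icc n (m + 1), bmT (m + 1) n k := by
    rw [d, if_pos ⟨h0, by omega⟩]
    rfl
  have hd2 : d m i = ((2 : ℝ) ^ (2 * m))⁻¹ * ∑ k ∈ Icc n m, bmT m n k := by
    rw [d, if_pos ⟨h0, h1⟩]
    rfl
  have hd3 : d m (i + 1) = ((2 : ℝ) ^ (2 * m))⁻¹ * ∑ k ∈ Icc n m, bmT m (n + 1) k := by
    rcases eq_or_lt_of_le hnm with heq | hlt
    · subst heq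
      rw [d, if_neg (by omega)]
      rw [Finset.Icc_self, Finset.sum_singleton]
      unfold bmT
      rw [Nat.choose_succ_self]
      push_cast
      ring
    · rw [d, if_pos ⟨by omega, by omega⟩]
      have ht : (i + 1).toNat = n + 1 := by omega
      rw [ht]
      have hsplit : ∑ k ∈ Icc n m, bmT m (n + 1) k
          = bmT m (n + 1) n + ∑ k ∈ Icc (n + 1) m, bmT m (n + 1) k := by
        rw [Finset.Icc_eq_cons_Ioc (le_of_lt hlt), Finset.sum_cons, ← Finset.Icc_add_one_left_eq_Ioc]
      rw [hsplit]
      have : bmT m (n + 1) n = 0 := by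
        unfold bmT
        rw [Nat.choose_succ_self]
        push_cast
        ring
      rw [this, zero_add]
      rfl
  have key := bm_master m n hnm
  have hp : ((2 : ℝ) ^ (2 * m)) ≠ 0 := by positivity
  have hm1 : ((m : ℝ) + 1) ≠ 0 := by positivity
  have hnr : (n : ℝ) ≤ (m : ℝ) := by exact_mod_cast hnm
  have hmn : ((m : ℝ) + 1 - (n : ℝ)) ≠ 0 := by nlinarith
  have hpow : ((2 : ℝ) ^ (2 * (m + 1))) = 4 * (2 : ℝ) ^ (2 * m) := by
    rw [show 2 * (m + 1) = 2 * m + 2 by ring, pow_add]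
    ring
  have hX : ∑ k ∈ Icc n (m + 1), bmT (m + 1) n k
      = (2 * (4 * (m : ℝ) - 2 * (n : ℝ) + 3) * ((m : ℝ) + (n : ℝ) + 1) *
            ∑ k ∈ Icc n m, bmT m n k
          - 4 * (n : ℝ) * ((n : ℝ) + 1) * ∑ k ∈ Icc n m, bmT m (n + 1) k)
        / (((m : ℝ) + 1) * ((m : ℝ) + 1 - (n : ℝ))) := by
    rw [eq_div_iff (mul_ne_zero hm1 hmn)]
    linear_combination key
  rw [hd1, hd2, hd3, hir, hpow, hX]
  push_cast
  field_simp
  ring
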